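/- Let G = (V, E) be a finite simple graph with maximum degree at most ℓ, and construct chains c_v as follows: c_v contains the edges incident to v plus ℓ - deg(v) fresh auxiliary elements unique to v. Then the maximum size of a family W ⊆ V such that the chains {c_v : v ∈ W} are pairwise disjoint equals the maximum size of an independent set in G. -/

import Mathlib

theorem stmt_12 {V : Type*} [Fintype V] [DecidableEq V]
    (G : SimpleGraph V) [DecidableRel G.Adj] (ℓ : ℕ)
    (hdeg : ∀ v, G.degree v ≤ ℓ)
    (c : V → Finset (Sym2 V ⊕ V × ℕ))
    (hc : ∀ v, c v = (G.incidenceFinset v).image Sum.inl ∪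
        (Finset.range (ℓ - G.degree v)).image (fun i => Sum.inr (v, i))) :
    sSup {n : ℕ | ∃ W : Finset V, W.card = n ∧
        ∀ u ∈ W, ∀ v ∈ W, u ≠ v → Disjoint (c u) (c v)}
      = sSup {n : ℕ | ∃ W : Finset V, W.card = n ∧
          ∀ u ∈ W, ∀ v ∈ W, ¬ G.Adj u v} := by
  have key : ∀ u v : V, u ≠ v → (Disjoint (c u) (c v) ↔ ¬ G.Adj u v) := by
    intro u v huv
    constructor
    · intro hdis hadj
      have hu : (Sum.inl s(u, v) : Sym2 V ⊕ V × ℕ) ∈ c u := by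
        rw [hc]
        apply Finset.mem_union_left
        exact Finset.mem_image_of_mem _ (by
          rw [SimpleGraph.mem_incidenceFinset]
          exact ⟨hadj, Sym2.mem_mk_left u v⟩)
      have hv : (Sum.inl s(u, v) : Sym2 V ⊕ V × ℕ) ∈ c v := by
        rw [hc]
        apply Finset.mem_union_left
        exact Finset.mem_image_of_mem _ (by
          rw [SimpleGraph.mem_incidenceFinset]
          exact ⟨hadj, Sym2.mem_mk_right u v⟩)
      exact (Finset.disjoint_left.1 hdis hu) hv
    · intro hnadj
      rw [Finset.disjoint_left]
      intro a ha hb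
      rw [hc] at ha hb
      rcases Finset.mem_union.1 ha with h1 | h1 <;>
        rcases Finset.mem_union.1 hb with h2 | h2
      · obtain ⟨e, he, rfl⟩ := Finset.mem_image.1 h1
        obtain ⟨e', he', heq⟩ := Finset.mem_image.1 h2
        have : e' = e := Sum.inl.inj heq
        rw [this] at he'
        rw [SimpleGraph.mem_incidenceFinset] at he he'
        have heuv : e = s(u, v) := (Sym2.mem_and_mem_iff huv).1 ⟨he.2, he'.2⟩
        exact hnadj (G.mem_edgeSet.1 (heuv ▸ he.1))
      · obtain ⟨e, -, rfl⟩ := Finset.mem_image.1 h1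
        obtain ⟨i, -, heq⟩ := Finset.mem_image.1 h2
        cases heq
      · obtain ⟨i, -, rfl⟩ := Finset.mem_image.1 h1
        obtain ⟨e, -, heq⟩ := Finset.mem_image.1 h2
        cases heq
      · obtain ⟨i, -, rfl⟩ := Finset.mem_image.1 h1
        obtain ⟨j, -, heq⟩ := Finset.mem_image.1 h2
        exact huv (congrArg Prod.fst (Sum.inr.inj heq)).symm
  congr 1
  ext n
  constructor
  · rintro ⟨W, hW, hpd⟩
    refine ⟨W, hW, fun u hu v hv => ?_⟩
    by_cases h : u = v
    · subst h; exact G.loopless.irrefl u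
    · exact (key u v h).1 (hpd u hu v hv h)
  · rintro ⟨W, hW, hna⟩
    exact ⟨W, hW, fun u hu v hv h => (key u v h).2 (hna u hu v hv)⟩
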